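/- For m ≥ 3, the local antimagic chromatic number of the cycle C_m is 3. -/

import Mathlib

open Finset

namespace LocalAntimagic

variable {V : Type*} [Fintype V] [DecidableEq V]

/-- The induced vertex label: sum of labels of edges incident to `v`. -/
def inducedSum (G : SimpleGraph V) [DecidableRel G.Adj] (f : Sym2 V → ℕ) (v : V) : ℕ :=
  ∑ e ∈ G.incidenceFinset v, f e

/-- `f` is a local antimagic labeling of `G`: a bijection from the edge set onto
`{1, …, q}` (`q` the number of edges) such that adjacent vertices get distinct
induced sums. -/
def IsLocalAntimagic (G : SimpleGraph V) [DecidableRel G.Adj] (f : Sym2 V → ℕ) : Prop :=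
  Set.BijOn f G.edgeSet (Set.Icc 1 G.edgeFinset.card) ∧
  ∀ ⦃u v⦄, G.Adj u v → inducedSum G f u ≠ inducedSum G f v

/-- The number of distinct induced vertex labels under `f`. -/
def colorCount (G : SimpleGraph V) [DecidableRel G.Adj] (f : Sym2 V → ℕ) : ℕ :=
  (Finset.image (inducedSum G f) Finset.univ).card

/-- The local antimagic chromatic number of `G` (`⊤` if no local antimagic
labeling exists). -/
noncomputable def chiLA (G : SimpleGraph V) [DecidableRel G.Adj] : ℕ∞ :=
  sInf {n : ℕ∞ | ∃ f : Sym2 V → ℕ, IsLocalAntimagic G f ∧ (colorCount G f : ℕ∞) = n}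

/-- The circulant graph on `ℤ/nℤ` with connection set `S`. -/
def circulant (n : ℕ) [NeZero n] (S : Finset (ZMod n)) : SimpleGraph (ZMod n) where
  Adj u v := u ≠ v ∧ (u - v ∈ S ∨ v - u ∈ S)
  symm := ⟨fun u v h => ⟨h.1.symm, h.2.symm⟩⟩
  loopless := ⟨fun v h => h.1 rfl⟩

instance (n : ℕ) [NeZero n] (S : Finset (ZMod n)) : DecidableRel (circulant n S).Adj :=
  fun u v => inferInstanceAs (Decidable (u ≠ v ∧ (u - v ∈ S ∨ v - u ∈ S)))

/-- The cycle `C_n` as a circulant graph on `ℤ/nℤ`. -/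
def cycle (n : ℕ) [NeZero n] : SimpleGraph (ZMod n) := circulant n {1}

instance (n : ℕ) [NeZero n] : DecidableRel (cycle n).Adj :=
  inferInstanceAs (DecidableRel (circulant n {1}).Adj)

/-- The graph obtained from `G` by merging vertices according to the
identification map `q` (adjacent iff distinct and some preimages are adjacent). -/
def mergeGraph {V' W : Type*} (G : SimpleGraph V') (q : V' → W) : SimpleGraph W where
  Adj a b := a ≠ b ∧ ∃ u v, q u = a ∧ q v = b ∧ G.Adj u v
  symm := by
    refine ⟨?_⟩
    rintro a b ⟨hab, u, v, hu, hv, huv⟩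
    exact ⟨hab.symm, v, u, hv, hu, huv.symm⟩
  loopless := ⟨fun a h => h.1 rfl⟩

-- ============ auxiliary development ============
section Cyc

variable {m : ℕ} [NeZero m]

/-- The edge from `v` to `v+1`. -/
def ed (v : ZMod m) : Sym2 (ZMod m) := s(v, v + 1)

lemma one_ne_zero' (hm : 3 ≤ m) : (1 : ZMod m) ≠ 0 := by
  intro h
  have : ((1:ℕ) : ZMod m) = 0 := by exact_mod_cast h
  rw [ZMod.natCast_eq_zero_iff] at this
  have := Nat.le_of_dvd one_pos this
  omega
  
lemma two_ne_zero' (hm : 3 ≤ m) : (2 : ZMod m) ≠ 0 := by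
  intro h
  have : ((2:ℕ) : ZMod m) = 0 := by exact_mod_cast h
  rw [ZMod.natCast_eq_zero_iff] at this
  have := Nat.le_of_dvd (by norm_num) this
  omega

lemma cycle_adj_iff (hm : 3 ≤ m) {u v : ZMod m} :
    (cycle m).Adj u v ↔ (u = v + 1 ∨ v = u + 1) := by
  change (u ≠ v ∧ (u - v ∈ ({1} : Finset (ZMod m)) ∨ v - u ∈ ({1} : Finset (ZMod m)))) ↔ _
  constructor
  · rintro ⟨hne, h | h⟩
    · left; rw [Finset.mem_singleton] at h; rw [← h]; ring
    · right; rw [Finset.mem_singleton] at h; rw [← h]; ring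
  · intro h
    have h1 : (1 : ZMod m) ≠ 0 := one_ne_zero' hm
    rcases h with h | h
    · refine ⟨?_, Or.inl ?_⟩
      · rw [h]; intro h2; exact h1 (by linear_combination h2)
      · rw [h, Finset.mem_singleton]; ring
    · refine ⟨?_, Or.inr ?_⟩
      · rw [h]; intro h2; exact h1 (by linear_combination h2.symm)
      · rw [h, Finset.mem_singleton]; ring

lemma cycle_adj_succ (hm : 3 ≤ m) (v : ZMod m) : (cycle m).Adj v (v + 1) :=
  (cycle_adj_iff hm).2 (Or.inr rfl)

lemma ed_injective (hm : 3 ≤ m) : Function.Injective (ed (m := m)) := by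
  intro u v h
  rw [ed, ed, Sym2.eq_iff] at h
  rcases h with ⟨h1, _⟩ | ⟨h1, h2⟩
  · exact h1
  · exfalso
    have : (2 : ZMod m) = 0 := by linear_combination h2 - h1
    exact two_ne_zero' hm this

lemma mem_edgeSet_iff (hm : 3 ≤ m) (e : Sym2 (ZMod m)) :
    e ∈ (cycle m).edgeSet ↔ ∃ v, e = ed v := by
  induction e with
  | h a b =>
    rw [SimpleGraph.mem_edgeSet, cycle_adj_iff hm]
    constructor
    · rintro (h | h)
      · exact ⟨b, by rw [ed, ← h, Sym2.eq_swap]⟩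
      · exact ⟨a, by rw [ed, ← h]⟩
    · rintro ⟨v, hv⟩
      rw [ed] at hv
      rw [Sym2.eq_iff] at hv
      rcases hv with ⟨h1, h2⟩ | ⟨h1, h2⟩
      · right; rw [h1, h2]
      · left; rw [h1, h2]

lemma mem_incidenceSet_iff (hm : 3 ≤ m) (v : ZMod m) (e : Sym2 (ZMod m)) :
    e ∈ (cycle m).incidenceSet v ↔ e = ed (v - 1) ∨ e = ed v := by
  rw [SimpleGraph.incidenceSet, Set.mem_sep_iff, mem_edgeSet_iff hm]
  constructor
  · rintro ⟨⟨u, rfl⟩, hv⟩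
    rw [ed, Sym2.mem_iff] at hv
    rcases hv with rfl | rfl
    · right; rfl
    · left; rw [ed]; congr 1 <;> ring
  · rintro (rfl | rfl)
    · exact ⟨⟨v - 1, rfl⟩, by rw [ed, Sym2.mem_iff]; right; ring⟩
    · exact ⟨⟨v, rfl⟩, by rw [ed, Sym2.mem_iff]; left; rfl⟩

lemma incidenceFinset_eq (hm : 3 ≤ m) (v : ZMod m) :
    (cycle m).incidenceFinset v = {ed (v - 1), ed v} := by
  ext e
  rw [SimpleGraph.mem_incidenceFinset, mem_incidenceSet_iff hm, Finset.mem_insert,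
    Finset.mem_singleton]

lemma ed_sub_one_ne (hm : 3 ≤ m) (v : ZMod m) : ed (v - 1) ≠ ed v := by
  intro h
  have := ed_injective hm h
  have h1 : (1 : ZMod m) ≠ 0 := one_ne_zero' hm
  exact h1 (by linear_combination -this)

lemma inducedSum_eq (hm : 3 ≤ m) (f : Sym2 (ZMod m) → ℕ) (v : ZMod m) :
    inducedSum (cycle m) f v = f (ed (v - 1)) + f (ed v) := by
  rw [inducedSum, incidenceFinset_eq hm, Finset.sum_pair (ed_sub_one_ne hm v)]

lemma edgeFinset_card (hm : 3 ≤ m) : (cycle m).edgeFinset.card = m := by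
  have : (cycle m).edgeFinset = Finset.image ed Finset.univ := by
    ext e
    rw [SimpleGraph.mem_edgeFinset, mem_edgeSet_iff hm, Finset.mem_image]
    simp [eq_comm]
  rw [this, Finset.card_image_of_injective _ (ed_injective hm)]
  simp [ZMod.card]


-- ===== lower bound =====
lemma three_le_colorCount (hm : 3 ≤ m) (f : Sym2 (ZMod m) → ℕ)
    (hf : ∀ ⦃u v : ZMod m⦄, (cycle m).Adj u v →
      inducedSum (cycle m) f u ≠ inducedSum (cycle m) f v) :
    3 ≤ colorCount (cycle m) f := by
  set s : ZMod m → ℕ := inducedSum (cycle m) f with hs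
  by_contra hlt
  push_neg at hlt
  -- adjacent sums differ
  have hadj : ∀ v : ZMod m, s (v + 1) ≠ s v :=
    fun v => (hf (cycle_adj_succ hm v)).symm
  have hne01 : s 0 ≠ s 1 := by
    have := hadj 0; rw [zero_add] at this; exact this.symm
  -- the image is exactly {s 0, s 1}
  have hsub : ({s 0, s 1} : Finset ℕ) ⊆ Finset.image s Finset.univ := by
    intro x hx
    rw [Finset.mem_insert, Finset.mem_singleton] at hx
    rcases hx with rfl | rfl <;> exact Finset.mem_image_of_mem s (Finset.mem_univ _)
  have hcard2 : ({s 0, s 1} : Finset ℕ).card = 2 := by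
    rw [Finset.card_insert_of_notMem (by simpa using hne01), Finset.card_singleton]
  have hle2 : (Finset.image s Finset.univ).card ≤ 2 := by
    have : colorCount (cycle m) f = (Finset.image s Finset.univ).card := rfl
    omega
  have heq : Finset.image s Finset.univ = {s 0, s 1} :=
    (Finset.eq_of_subset_of_card_le hsub (by omega)).symm
  have hmem : ∀ v : ZMod m, s v = s 0 ∨ s v = s 1 := by
    intro v
    have : s v ∈ Finset.image s Finset.univ := Finset.mem_image_of_mem s (Finset.mem_univ _)
    rw [heq, Finset.mem_insert, Finset.mem_singleton] at this
    exact this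
  -- alternation
  have halt : ∀ v : ZMod m, s (v + 2) = s v := by
    intro v
    have h2 : s (v + 2) ≠ s (v + 1) := by
      have := hadj (v + 1); rwa [add_assoc, one_add_one_eq_two] at this
    have h1 := hadj v
    rcases hmem (v + 1) with h | h
    · rcases hmem (v + 2) with h' | h' <;> rcases hmem v with h'' | h'' <;> omega
    · rcases hmem (v + 2) with h' | h' <;> rcases hmem v with h'' | h'' <;> omega
  have hcast2 : ∀ k : ℕ, ((2 * k + 2 : ℕ) : ZMod m) = ((2 * k : ℕ) : ZMod m) + 2 := by
    intro k; push_cast; ring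
  have hS : ∀ k : ℕ, s ((2 * k : ℕ) : ZMod m) = s 0 ∧ s ((2 * k + 1 : ℕ) : ZMod m) = s 1 := by
    intro k
    induction k with
    | zero => constructor <;> norm_num
    | succ k ih =>
      have e1 : ((2 * (k + 1) : ℕ) : ZMod m) = ((2 * k : ℕ) : ZMod m) + 2 := by
        push_cast; ring
      have e2 : ((2 * (k + 1) + 1 : ℕ) : ZMod m) = ((2 * k + 1 : ℕ) : ZMod m) + 2 := by
        push_cast; ring
      rw [e1, e2, halt, halt]
      exact ih
  rcases Nat.even_or_odd m with ⟨t, ht⟩ | ⟨t, ht⟩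
  · -- even case
    have ht2 : 2 ≤ t := by omega
    set g : ZMod m → ℤ := fun v => (f (ed v) : ℤ) with hg
    have hsI : ∀ v : ZMod m, (s v : ℤ) = g (v - 1) + g v := by
      intro v
      rw [hs, inducedSum_eq hm]
      push_cast
      rfl
    have hstep : ∀ v : ZMod m, g (v + 2) = g v + ((s (v + 2) : ℤ) - (s (v + 1) : ℤ)) := by
      intro v
      have e1 := hsI (v + 2)
      have e2 := hsI (v + 1)
      have r1 : v + 2 - 1 = v + 1 := by ring
      have r2 : v + 1 - 1 = v := by ring
      rw [r1] at e1; rw [r2] at e2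
      linarith
    have hchain : ∀ k : ℕ, g ((2 * k : ℕ) : ZMod m) = g 0 + k * ((s 0 : ℤ) - (s 1 : ℤ)) := by
      intro k
      induction k with
      | zero => norm_num
      | succ k ih =>
        have e1 : ((2 * (k + 1) : ℕ) : ZMod m) = ((2 * k : ℕ) : ZMod m) + 2 := by
          push_cast; ring
        have e2 : ((2 * k : ℕ) : ZMod m) + 1 = ((2 * k + 1 : ℕ) : ZMod m) := by
          push_cast; ring
        rw [e1, hstep, ih, ← hcast2 k, e2, (hS (k+1)).1.symm, (hS k).2]
        have : ((2 * (k + 1) : ℕ) : ZMod m) = ((2 * k + 2 : ℕ) : ZMod m) := by norm_num; ring_nf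
        rw [← this]
        push_cast
        ring
    have hfin := hchain t
    have hm0 : ((2 * t : ℕ) : ZMod m) = 0 := by
      have h2t : 2 * t = m := by omega
      rw [h2t]; exact ZMod.natCast_self m
    rw [hm0] at hfin
    have : (t : ℤ) * ((s 0 : ℤ) - (s 1 : ℤ)) = 0 := by linarith
    have hd : (s 0 : ℤ) = (s 1 : ℤ) := by
      rcases mul_eq_zero.1 this with h | h
      · exfalso
        have ht0 : (t:ℤ) ≠ 0 := by exact_mod_cast (by omega : t ≠ 0)
        exact ht0 h
      · linarith
    exact hne01 (by exact_mod_cast hd)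
  · -- odd case
    have h0 : ((2 * t + 1 : ℕ) : ZMod m) = 0 := by rw [← ht]; exact ZMod.natCast_self m
    have := (hS t).2
    rw [h0] at this
    exact hne01 this


-- ===== upper bound construction =====

/-- label value for the edge `ed v` where `w = v.val`. -/
def gfun (m w : ℕ) : ℕ := if Even w then w / 2 + 1 else m - w / 2

noncomputable def lab (m : ℕ) [NeZero m] : Sym2 (ZMod m) → ℕ :=
  fun e => if h : ∃ v : ZMod m, e = ed v then gfun m h.choose.val else 0

lemma natCast_val_self (v : ZMod m) : ((v.val : ℕ) : ZMod m) = v := by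
  rw [ZMod.natCast_val, ZMod.cast_id]

lemma lab_ed (hm : 3 ≤ m) (v : ZMod m) : lab m (ed v) = gfun m v.val := by
  rw [lab]
  have h : ∃ u : ZMod m, ed v = ed u := ⟨v, rfl⟩
  rw [dif_pos h]
  congr 1
  exact congrArg ZMod.val (ed_injective hm h.choose_spec).symm

lemma val_sub_one (hm : 3 ≤ m) {v : ZMod m} (hv : v ≠ 0) : (v - 1).val = v.val - 1 := by
  have h1 : 1 ≤ v.val := by
    rcases Nat.eq_zero_or_pos v.val with h | h
    · exact absurd (ZMod.val_eq_zero v |>.1 h) hv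
    · exact h
  have h2 : v - 1 = ((v.val - 1 : ℕ) : ZMod m) := by
    rw [Nat.cast_sub h1, natCast_val_self, Nat.cast_one]
  rw [h2, ZMod.val_natCast_of_lt (by have := ZMod.val_lt v; omega)]

lemma neg_one_val (hm : 3 ≤ m) : (-1 : ZMod m).val = m - 1 := by
  have h2 : (-1 : ZMod m) = ((m - 1 : ℕ) : ZMod m) := by
    rw [Nat.cast_sub (by omega), ZMod.natCast_self, Nat.cast_one]
    ring
  rw [h2, ZMod.val_natCast_of_lt (by omega)]

lemma val_one' (hm : 3 ≤ m) : (1 : ZMod m).val = 1 := by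
  have : (1 : ZMod m) = ((1 : ℕ) : ZMod m) := by norm_num
  rw [this, ZMod.val_natCast_of_lt (by omega)]

lemma val_two' (hm : 3 ≤ m) : (2 : ZMod m).val = 2 := by
  have : (2 : ZMod m) = ((2 : ℕ) : ZMod m) := by norm_num
  rw [this, ZMod.val_natCast_of_lt (by omega)]

lemma sum_lab (hm : 3 ≤ m) (v : ZMod m) :
    inducedSum (cycle m) (lab m) v =
      if v = 0 then m / 2 + 2 else if Even v.val then m + 2 else m + 1 := by
  rw [inducedSum_eq hm, lab_ed hm, lab_ed hm]
  by_cases hv : v = 0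
  · subst hv
    rw [if_pos rfl]
    have h1 : ((0 : ZMod m) - 1) = -1 := by ring
    rw [h1, neg_one_val hm, ZMod.val_zero]
    simp only [gfun, Nat.even_iff]
    split_ifs <;> omega
  · rw [if_neg hv, val_sub_one hm hv]
    have h1 : 1 ≤ v.val := by
      rcases Nat.eq_zero_or_pos v.val with h | h
      · exact absurd (ZMod.val_eq_zero v |>.1 h) hv
      · exact h
    have h2 := ZMod.val_lt v
    simp only [gfun, Nat.even_iff]
    split_ifs <;> omega

lemma val_add_one (hm : 3 ≤ m) {v : ZMod m} (hv : v + 1 ≠ 0) :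
    (v + 1).val = v.val + 1 := by
  have h2 := ZMod.val_lt v
  have h3 : v + 1 = ((v.val + 1 : ℕ) : ZMod m) := by
    rw [Nat.cast_add, natCast_val_self, Nat.cast_one]
  have h4 : v.val + 1 ≠ m := by
    intro h
    apply hv
    rw [h3, h, ZMod.natCast_self]
  rw [h3, ZMod.val_natCast_of_lt (by omega)]

lemma sum_lab_succ_ne (hm : 3 ≤ m) (v : ZMod m) :
    inducedSum (cycle m) (lab m) (v + 1) ≠ inducedSum (cycle m) (lab m) v := by
  rw [sum_lab hm, sum_lab hm]
  by_cases hv : v = 0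
  · subst hv
    rw [if_pos rfl, if_neg (by rw [zero_add]; exact one_ne_zero' hm), zero_add, val_one' hm]
    simp only [Nat.even_iff]
    split_ifs <;> omega
  · by_cases hv1 : v + 1 = 0
    · rw [if_pos hv1, if_neg hv]
      have hveq : v = -1 := by linear_combination hv1
      rw [hveq, neg_one_val hm]
      simp only [Nat.even_iff]
      split_ifs <;> omega
    · rw [if_neg hv1, if_neg hv, val_add_one hm hv1]
      simp only [Nat.even_iff]
      split_ifs <;> omega

lemma lab_adj_ne (hm : 3 ≤ m) : ∀ ⦃u v : ZMod m⦄, (cycle m).Adj u v →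
    inducedSum (cycle m) (lab m) u ≠ inducedSum (cycle m) (lab m) v := by
  intro u v hadj
  rcases (cycle_adj_iff hm).1 hadj with h | h
  · subst h; exact sum_lab_succ_ne hm v
  · subst h; exact (sum_lab_succ_ne hm u).symm

lemma lab_bijOn (hm : 3 ≤ m) :
    Set.BijOn (lab m) (cycle m).edgeSet (Set.Icc 1 (cycle m).edgeFinset.card) := by
  rw [edgeFinset_card hm]
  refine ⟨?_, ?_, ?_⟩
  · rintro e he
    obtain ⟨v, rfl⟩ := (mem_edgeSet_iff hm e).1 he
    rw [lab_ed hm]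
    have h2 := ZMod.val_lt v
    constructor <;>
      (simp only [gfun, Nat.even_iff]; split_ifs <;> omega)
  · rintro e1 he1 e2 he2 hl
    obtain ⟨u, rfl⟩ := (mem_edgeSet_iff hm e1).1 he1
    obtain ⟨v, rfl⟩ := (mem_edgeSet_iff hm e2).1 he2
    rw [lab_ed hm, lab_ed hm] at hl
    have h1 := ZMod.val_lt u
    have h2 := ZMod.val_lt v
    have : u.val = v.val := by
      simp only [gfun, Nat.even_iff] at hl
      split_ifs at hl <;> omega
    exact congrArg ed (ZMod.val_injective m this)
  · rintro n ⟨h1, h2⟩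
    by_cases hc : 2 * (n - 1) < m
    · refine ⟨ed ((2 * (n - 1) : ℕ) : ZMod m), (mem_edgeSet_iff hm _).2 ⟨_, rfl⟩, ?_⟩
      rw [lab_ed hm, ZMod.val_natCast_of_lt hc]
      simp only [gfun, Nat.even_iff]
      split_ifs <;> omega
    · refine ⟨ed ((2 * (m - n) + 1 : ℕ) : ZMod m), (mem_edgeSet_iff hm _).2 ⟨_, rfl⟩, ?_⟩
      rw [lab_ed hm, ZMod.val_natCast_of_lt (by omega)]
      simp only [gfun, Nat.even_iff]
      split_ifs <;> omega

lemma colorCount_lab (hm : 3 ≤ m) : colorCount (cycle m) (lab m) = 3 := by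
  have himg : Finset.image (inducedSum (cycle m) (lab m)) Finset.univ
      = {m / 2 + 2, m + 1, m + 2} := by
    apply Finset.Subset.antisymm
    · intro x hx
      rw [Finset.mem_image] at hx
      obtain ⟨v, -, rfl⟩ := hx
      rw [sum_lab hm]
      simp only [Finset.mem_insert, Finset.mem_singleton]
      split_ifs <;> tauto
    · intro x hx
      simp only [Finset.mem_insert, Finset.mem_singleton] at hx
      rw [Finset.mem_image]
      rcases hx with rfl | rfl | rfl
      · exact ⟨0, Finset.mem_univ _, by rw [sum_lab hm, if_pos rfl]⟩
      · refine ⟨1, Finset.mem_univ _, ?_⟩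
        rw [sum_lab hm, if_neg (one_ne_zero' hm), val_one' hm]
        norm_num
      · refine ⟨2, Finset.mem_univ _, ?_⟩
        rw [sum_lab hm, if_neg (two_ne_zero' hm), val_two' hm]
        norm_num
  rw [colorCount, himg]
  rw [Finset.card_insert_of_notMem, Finset.card_insert_of_notMem, Finset.card_singleton]
  · simp only [Finset.mem_singleton]; omega
  · simp only [Finset.mem_insert, Finset.mem_singleton]
    push_neg
    omega

end Cyc

end LocalAntimagic
open LocalAntimagic in
/-- `χ_la(C_m) = 3` for all `m ≥ 3`. -/
theorem stmt11 (m : ℕ) [NeZero m] (hm : 3 ≤ m) : chiLA (cycle m) = 3 := by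
  apply le_antisymm
  · apply sInf_le
    refine ⟨lab m, ⟨lab_bijOn hm, lab_adj_ne hm⟩, ?_⟩
    rw [colorCount_lab hm]
    rfl
  · apply le_sInf
    rintro n ⟨f, ⟨-, hadj⟩, rfl⟩
    have h := three_le_colorCount hm f hadj
    exact_mod_cast h
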